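/- Let C be a stable curve whose dual graph has first Betti number 0 (C of compact type). Then for any d : V(Γ_C) → ℤ/r with total sum ≡ deg N (mod r), there is exactly one weighted subgraph Δ^w of Γ_C satisfying conditions (C1) and (C2). Moreover Δ = ∅ (the empty subgraph with no blown-up nodes) if and only if d ≡ 0, i.e., the degree of N on every component is divisible by r. (Combinatorial formulation: for a finite tree T and d : V(T) → ℤ/r with Σ d(v) = 0, there is a unique assignment of weights w(h) ∈ {0,1,…,r−1} to half-edges with w(h) + w(h') ≡ 0 mod r for each edge {h,h'} and Σ_{h at v} w(h) ≡ d(v) mod r for each vertex; and all weights are 0 iff d ≡ 0. Here an edge is 'in Δ' iff its weights are nonzero.) -/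

import Mathlib

namespace Stmt11Aux

/-- The core statement: unique "flow" with prescribed divergence. -/
def Stmt (r : ℕ) (V E : Type) [Fintype V] [Fintype E] [DecidableEq V]
    (head tail : E → V) : Prop :=
  ∀ d : V → ZMod r, ∑ x, d x = 0 →
    ∃! u : E → ZMod r, ∀ x,
      (∑ e, ((if head e = x then u e else 0) - (if tail e = x then u e else 0))) = d x

lemma ite_neg' {M : Type*} [SubtractionMonoid M] (c : Prop) [Decidable c] (a : M) :
    (if c then -a else 0) = -(if c then a else 0) := by split <;> simp

lemma sum_split {α : Type} {M : Type*} [Fintype α] [DecidableEq α] [AddCommMonoid M]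
    (a : α) (f : α → M) :
    ∑ x, f x = f a + ∑ x : {y : α // y ≠ a}, f x.1 := by
  rw [← Finset.sum_subtype (Finset.univ.erase a) (fun x => by simp) f]
  exact (Finset.add_sum_erase _ f (Finset.mem_univ a)).symm

lemma stmt_symm (r : ℕ) (V E : Type) [Fintype V] [Fintype E] [DecidableEq V]
    (head tail : E → V) (h : Stmt r V E tail head) : Stmt r V E head tail := by
  intro d hd
  obtain ⟨u, hu, huniq⟩ := h d hd
  refine ⟨fun e => -u e, fun x => ?_, fun w hw => ?_⟩
  · calc ∑ e, ((if head e = x then -u e else 0) - (if tail e = x then -u e else 0))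
        = ∑ e, ((if tail e = x then u e else 0) - (if head e = x then u e else 0)) := by
          refine Finset.sum_congr rfl fun e _ => ?_
          rw [ite_neg', ite_neg']; ring
      _ = d x := hu x
  · have hw' : ∀ x, ∑ e, ((if tail e = x then -w e else 0) - (if head e = x then -w e else 0))
        = d x := by
      intro x
      calc ∑ e, ((if tail e = x then -w e else 0) - (if head e = x then -w e else 0))
          = ∑ e, ((if head e = x then w e else 0) - (if tail e = x then w e else 0)) := by
            refine Finset.sum_congr rfl fun e _ => ?_
            rw [ite_neg', ite_neg']; ring
        _ = d x := hw x
    have h2 := huniq (fun e => -w e) hw'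
    funext e
    have h3 := congrFun h2 e
    rw [← h3, neg_neg]

def restH {V E : Type} (x₀ : V) (e₀ : E) (head : E → V)
    (h : ∀ e : E, e ≠ e₀ → head e ≠ x₀) : {e : E // e ≠ e₀} → {y : V // y ≠ x₀} :=
  fun e => ⟨head e.1, h e.1 e.2⟩

@[simp] lemma restH_coe {V E : Type} (x₀ : V) (e₀ : E) (head : E → V) (h) (e) :
    (restH x₀ e₀ head h e).1 = head e.1 := rfl

lemma restH_eq_iff {V E : Type} (x₀ : V) (e₀ : E) (head : E → V) (h) (e)
    (y : {y : V // y ≠ x₀}) :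
    restH x₀ e₀ head h e = y ↔ head e.1 = y.1 := by
  rw [Subtype.ext_iff, restH_coe]

lemma step (r : ℕ) (V E : Type) [Fintype V] [Fintype E] [DecidableEq V] [DecidableEq E]
    (head tail : E → V)
    (hconn : ∀ a b : V, Relation.ReflTransGen
      (fun x y => ∃ e, (head e = x ∧ tail e = y) ∨ (head e = y ∧ tail e = x)) a b)
    (htree : Fintype.card V = Fintype.card E + 1)
    (x₀ : V) (e₀ : E) (hh : head e₀ = x₀) (ht : tail e₀ ≠ x₀)
    (hother : ∀ e : E, e ≠ e₀ → head e ≠ x₀ ∧ tail e ≠ x₀)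
    (IH : ∀ (V' E' : Type) [Fintype V'] [Fintype E'] [DecidableEq V'] [DecidableEq E']
      (head' tail' : E' → V'),
      (∀ a b : V', Relation.ReflTransGen
        (fun x y => ∃ e, (head' e = x ∧ tail' e = y) ∨ (head' e = y ∧ tail' e = x)) a b) →
      Fintype.card V' = Fintype.card E' + 1 →
      Fintype.card E' = Fintype.card E - 1 →
      Stmt r V' E' head' tail') :
    Stmt r V E head tail := by
  have hne : ∀ e : E, e ≠ e₀ → head e ≠ x₀ := fun e he => (hother e he).1
  have hnt : ∀ e : E, e ≠ e₀ → tail e ≠ x₀ := fun e he => (hother e he).2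
  set H := restH x₀ e₀ head hne with hH
  set T := restH x₀ e₀ tail hnt with hT
  -- connectivity of the reduced graph
  have hconn' : ∀ a b : {y : V // y ≠ x₀}, Relation.ReflTransGen
      (fun x y => ∃ e, (H e = x ∧ T e = y) ∨ (H e = y ∧ T e = x)) a b := by
    intro a b
    set f : V → {y : V // y ≠ x₀} := fun x => if h : x = x₀ then ⟨tail e₀, ht⟩ else ⟨x, h⟩
      with hf
    have hfx : f x₀ = ⟨tail e₀, ht⟩ := by rw [hf]; exact dif_pos rfl
    have hfn : ∀ (x : V) (h : x ≠ x₀), f x = ⟨x, h⟩ := by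
      intro x h; rw [hf]; exact dif_neg h
    have hstep : ∀ p q : V,
        (∃ e, (head e = p ∧ tail e = q) ∨ (head e = q ∧ tail e = p)) →
        Relation.ReflTransGen
          (fun x y => ∃ e, (H e = x ∧ T e = y) ∨ (H e = y ∧ T e = x)) (f p) (f q) := by
      rintro p q ⟨e, he⟩
      by_cases h : e = e₀
      · rw [h] at he
        have : f p = f q := by
          rcases he with ⟨h1, h2⟩ | ⟨h1, h2⟩
          · have hp : p = x₀ := h1 ▸ hh
            rw [hp, hfx, ← h2, hfn (tail e₀) ht]
          · have hq : q = x₀ := h1 ▸ hh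
            rw [hq, hfx, ← h2, hfn (tail e₀) ht]
        rw [this]
      · refine Relation.ReflTransGen.single ⟨⟨e, h⟩, ?_⟩
        rcases he with ⟨h1, h2⟩ | ⟨h1, h2⟩
        · exact Or.inl ⟨by rw [hfn p (h1 ▸ hne e h), hH]; exact Subtype.ext h1,
            by rw [hfn q (h2 ▸ hnt e h), hT]; exact Subtype.ext h2⟩
        · exact Or.inr ⟨by rw [hfn q (h1 ▸ hne e h), hH]; exact Subtype.ext h1,
            by rw [hfn p (h2 ▸ hnt e h), hT]; exact Subtype.ext h2⟩
    have this : Relation.ReflTransGen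
        (fun x y => ∃ e, (H e = x ∧ T e = y) ∨ (H e = y ∧ T e = x)) (f a.1) (f b.1) :=
      Relation.ReflTransGen.lift' f hstep _ _ (hconn a.1 b.1)
    rwa [hfn a.1 a.2, hfn b.1 b.2, Subtype.coe_eta, Subtype.coe_eta] at this
  -- cardinalities
  have c1 : Fintype.card {y : V // y ≠ x₀} = Fintype.card V - 1 := by
    rw [Fintype.card_subtype_compl, Fintype.card_subtype_eq]
  have c2 : Fintype.card {e : E // e ≠ e₀} = Fintype.card E - 1 := by
    rw [Fintype.card_subtype_compl, Fintype.card_subtype_eq]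
  have hE1 : 1 ≤ Fintype.card E := Fintype.card_pos_iff.mpr ⟨e₀⟩
  have hcV' : Fintype.card {y : V // y ≠ x₀} = Fintype.card {e : E // e ≠ e₀} + 1 := by
    omega
  intro d hd
  -- the adjusted divergence on the reduced graph
  have hd'sum : ∑ y : {y : V // y ≠ x₀},
      (d y.1 + (if tail e₀ = y.1 then d x₀ else 0)) = 0 := by
    have s1 := sum_split x₀ d
    have s2 := sum_split x₀ (fun x => if tail e₀ = x then d x₀ else 0)
    simp only [Finset.sum_ite_eq, Finset.mem_univ, if_true, if_neg ht] at s2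
    rw [hd] at s1
    rw [Finset.sum_add_distrib]
    linear_combination -s1 - s2
  obtain ⟨u', hu', huniq'⟩ := IH {y : V // y ≠ x₀} {e : E // e ≠ e₀} H T hconn' hcV' c2
    (fun y => d y.1 + (if tail e₀ = y.1 then d x₀ else 0)) hd'sum
  -- conversion between reduced-graph conditions and coercion form
  have conv : ∀ (w : {e : E // e ≠ e₀} → ZMod r) (y : {y : V // y ≠ x₀}),
      (∑ e', ((if H e' = y then w e' else 0) - (if T e' = y then w e' else 0)))
      = ∑ e' : {e : E // e ≠ e₀},
          ((if head e'.1 = y.1 then w e' else 0) - (if tail e'.1 = y.1 then w e' else 0)) := by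
    intro w y
    refine Finset.sum_congr rfl fun e' _ => ?_
    rw [hH, hT]
    congr 1
    · exact if_congr (restH_eq_iff x₀ e₀ head hne e' y) rfl rfl
    · exact if_congr (restH_eq_iff x₀ e₀ tail hnt e' y) rfl rfl
  -- sum-splitting computations on the full graph
  have Sx₀ : ∀ w : E → ZMod r,
      (∑ e, ((if head e = x₀ then w e else 0) - (if tail e = x₀ then w e else 0))) = w e₀ := by
    intro w
    rw [sum_split e₀ (fun e => (if head e = x₀ then w e else 0) - (if tail e = x₀ then w e else 0))]
    show (if head e₀ = x₀ then w e₀ else 0) - (if tail e₀ = x₀ then w e₀ else 0)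
        + (∑ e' : {e : E // e ≠ e₀},
          ((if head e'.1 = x₀ then w e'.1 else 0) - (if tail e'.1 = x₀ then w e'.1 else 0)))
        = w e₀
    rw [Finset.sum_eq_zero fun e' _ => by
      rw [if_neg (hne e'.1 e'.2), if_neg (hnt e'.1 e'.2), sub_zero]]
    rw [if_pos hh, if_neg ht]
    ring
  have Sy : ∀ (w : E → ZMod r) (x : V), x ≠ x₀ →
      (∑ e, ((if head e = x then w e else 0) - (if tail e = x then w e else 0)))
      = (∑ e' : {e : E // e ≠ e₀},
          ((if head e'.1 = x then w e'.1 else 0) - (if tail e'.1 = x then w e'.1 else 0)))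
        - (if tail e₀ = x then w e₀ else 0) := by
    intro w x hx
    rw [sum_split e₀ (fun e => (if head e = x then w e else 0) - (if tail e = x then w e else 0))]
    show (if head e₀ = x then w e₀ else 0) - (if tail e₀ = x then w e₀ else 0)
        + (∑ e' : {e : E // e ≠ e₀},
          ((if head e'.1 = x then w e'.1 else 0) - (if tail e'.1 = x then w e'.1 else 0))) = _
    rw [if_neg (fun hcon => hx (hcon.symm.trans hh))]
    ring
  have hu2 : ∀ (x : V) (hx : x ≠ x₀),
      (∑ e' : {e : E // e ≠ e₀},
        ((if head e'.1 = x then u' e' else 0) - (if tail e'.1 = x then u' e' else 0)))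
      = d x + (if tail e₀ = x then d x₀ else 0) := by
    intro x hx
    have h3 := hu' ⟨x, hx⟩
    rw [conv u' ⟨x, hx⟩] at h3
    simpa using h3
  -- the solution
  set u : E → ZMod r := fun e => if h : e = e₀ then d x₀ else u' ⟨e, h⟩ with hu_def
  have hue₀ : u e₀ = d x₀ := by rw [hu_def]; exact dif_pos rfl
  have hue : ∀ e' : {e : E // e ≠ e₀}, u e'.1 = u' e' := by
    intro e'; rw [hu_def]; exact dif_neg e'.2
  refine ⟨u, fun x => ?_, fun w hw => ?_⟩
  · by_cases hx : x = x₀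
    · subst hx
      rw [Sx₀ u, hue₀]
    · rw [Sy u x hx]
      have hcongr : (∑ e' : {e : E // e ≠ e₀},
          ((if head e'.1 = x then u e'.1 else 0) - (if tail e'.1 = x then u e'.1 else 0)))
          = ∑ e' : {e : E // e ≠ e₀},
            ((if head e'.1 = x then u' e' else 0) - (if tail e'.1 = x then u' e' else 0)) :=
        Finset.sum_congr rfl fun e' _ => by rw [hue e']
      rw [hcongr, hu2 x hx, hue₀]
      ring
  · -- uniqueness
    have hwe₀ : w e₀ = d x₀ := (Sx₀ w).symm.trans (hw x₀)
    have hw'' : ∀ y : {y : V // y ≠ x₀},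
        (∑ e' : {e : E // e ≠ e₀},
          ((if H e' = y then w e'.1 else 0) - (if T e' = y then w e'.1 else 0)))
        = d y.1 + (if tail e₀ = y.1 then d x₀ else 0) := by
      intro y
      rw [conv (fun e' => w e'.1) y]
      have h3 := hw y.1
      rw [Sy w y.1 y.2] at h3
      rw [← h3, hwe₀]
      ring
    have hwu' : (fun e' : {e : E // e ≠ e₀} => w e'.1) = u' := huniq' _ hw''
    funext e
    by_cases h : e = e₀
    · subst h; exact hwe₀.trans hue₀.symm
    · exact (congrFun hwu' ⟨e, h⟩).trans (hue ⟨e, h⟩).symm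

lemma key (r : ℕ) (n : ℕ) :
    ∀ (V E : Type) [Fintype V] [Fintype E] [DecidableEq V] [DecidableEq E]
    (head tail : E → V),
    (∀ a b : V, Relation.ReflTransGen
      (fun x y => ∃ e, (head e = x ∧ tail e = y) ∨ (head e = y ∧ tail e = x)) a b) →
    Fintype.card V = Fintype.card E + 1 →
    Fintype.card E = n →
    Stmt r V E head tail := by
  induction n using Nat.strong_induction_on with
  | _ n ih =>
  intro V E _ _ _ _ head tail hconn htree hcard
  rcases Nat.eq_zero_or_pos n with h0 | hpos
  · -- base case : no edges, one vertex
    subst h0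
    haveI hE : IsEmpty E := Fintype.card_eq_zero_iff.mp hcard
    haveI hV : Subsingleton V := Fintype.card_le_one_iff_subsingleton.mp (by omega)
    intro d hd
    refine ⟨fun _ => 0, fun x => ?_, fun w _ => funext fun e => hE.elim e⟩
    have hdx : d x = 0 := by
      have h2 : ∑ y, d y = d x :=
        Fintype.sum_eq_single x (fun b hb => absurd (Subsingleton.elim b x) hb)
      exact h2.symm.trans hd
    simp [hdx]
  · -- inductive step : find a leaf
    have hVcard : 2 ≤ Fintype.card V := by omega
    have hinc : ∀ x : V, ∃ e, head e = x ∨ tail e = x := by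
      intro x
      obtain ⟨y, hy⟩ := Fintype.exists_ne_of_one_lt_card (by omega) x
      rcases (hconn x y).cases_head with h | ⟨c, ⟨e, he⟩, _⟩
      · exact absurd h.symm hy
      · rcases he with ⟨h1, _⟩ | ⟨_, h2⟩
        · exact ⟨e, Or.inl h1⟩
        · exact ⟨e, Or.inr h2⟩
    -- degree count
    have hdegsum : ∑ x : V, (∑ e : E, ((if head e = x then 1 else 0)
        + (if tail e = x then (1 : ℕ) else 0))) = 2 * Fintype.card E := by
      rw [Finset.sum_comm]
      have h2 : ∀ e : E, ∑ x : V, ((if head e = x then (1 : ℕ) else 0)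
          + (if tail e = x then 1 else 0)) = 2 := by
        intro e
        rw [Finset.sum_add_distrib, Finset.sum_ite_eq, Finset.sum_ite_eq]
        simp
      rw [Finset.sum_congr rfl fun e _ => h2 e]
      simp [mul_comm]
    have hdeg1 : ∀ x : V, 1 ≤ ∑ e : E, ((if head e = x then 1 else 0)
        + (if tail e = x then (1 : ℕ) else 0)) := by
      intro x
      obtain ⟨e, he⟩ := hinc x
      have h1 : 1 ≤ (if head e = x then 1 else 0) + (if tail e = x then (1 : ℕ) else 0) := by
        rcases he with h | h <;> simp [h]
      exact le_trans h1 (Finset.single_le_sum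
        (f := fun e => (if head e = x then 1 else 0) + (if tail e = x then (1 : ℕ) else 0))
        (fun i _ => Nat.zero_le _) (Finset.mem_univ e))
    have hleaf : ∃ x₀ : V, ∑ e : E, ((if head e = x₀ then 1 else 0)
        + (if tail e = x₀ then (1 : ℕ) else 0)) = 1 := by
      by_contra hcon
      push_neg at hcon
      have h2 : ∀ x : V, 2 ≤ ∑ e : E, ((if head e = x then 1 else 0)
          + (if tail e = x then (1 : ℕ) else 0)) := by
        intro x; have := hdeg1 x; have := hcon x; omega
      have h3 : 2 * Fintype.card V ≤ ∑ x : V, (∑ e : E, ((if head e = x then 1 else 0)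
          + (if tail e = x then (1 : ℕ) else 0))) := by
        calc 2 * Fintype.card V = ∑ _x : V, 2 := by simp [mul_comm]
          _ ≤ _ := Finset.sum_le_sum fun x _ => h2 x
      rw [hdegsum] at h3
      omega
    obtain ⟨x₀, hx₀⟩ := hleaf
    obtain ⟨e₀, he₀⟩ := hinc x₀
    have hte₀ : 1 ≤ (if head e₀ = x₀ then 1 else 0) + (if tail e₀ = x₀ then (1 : ℕ) else 0) := by
      rcases he₀ with h | h <;> simp [h]
    have hrest : ∑ e ∈ Finset.univ.erase e₀, ((if head e = x₀ then 1 else 0)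
        + (if tail e = x₀ then (1 : ℕ) else 0)) = 0 := by
      have h4 := Finset.add_sum_erase Finset.univ
        (fun e => (if head e = x₀ then 1 else 0) + (if tail e = x₀ then (1 : ℕ) else 0))
        (Finset.mem_univ e₀)
      omega
    have hother : ∀ e : E, e ≠ e₀ → head e ≠ x₀ ∧ tail e ≠ x₀ := by
      intro e he
      have h5 := (Finset.sum_eq_zero_iff).mp hrest e (by simp [he])
      constructor
      · intro hc; simp [hc] at h5
      · intro hc; simp [hc] at h5
    have hcase : (head e₀ = x₀ ∧ tail e₀ ≠ x₀) ∨ (tail e₀ = x₀ ∧ head e₀ ≠ x₀) := by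
      have h6 := Finset.add_sum_erase Finset.univ
        (fun e => (if head e = x₀ then 1 else 0) + (if tail e = x₀ then (1 : ℕ) else 0))
        (Finset.mem_univ e₀)
      rw [hrest] at h6
      rw [hx₀] at h6
      by_cases h1 : head e₀ = x₀ <;> by_cases h2 : tail e₀ = x₀ <;>
        simp [h1, h2] at h6 ⊢
    have hEn : Fintype.card E - 1 < n := by omega
    rcases hcase with ⟨hh, ht⟩ | ⟨hth, hhh⟩
    · exact step r V E head tail hconn htree x₀ e₀ hh ht hother
        (fun V' E' _ _ _ _ h' t' hc' hcd' hcd2' =>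
          ih (Fintype.card E - 1) hEn V' E' h' t' hc' hcd' hcd2')
    · refine stmt_symm r V E head tail ?_
      refine step r V E tail head ?_ htree x₀ e₀ hth hhh
        (fun e he => ⟨(hother e he).2, (hother e he).1⟩) ?_
      · intro a b
        refine Relation.ReflTransGen.mono (fun x y hxy => ?_) _ _ (hconn a b)
        obtain ⟨e, ⟨h1, h2⟩ | ⟨h1, h2⟩⟩ := hxy
        · exact ⟨e, Or.inr ⟨h2, h1⟩⟩
        · exact ⟨e, Or.inl ⟨h2, h1⟩⟩
      · exact fun V' E' _ _ _ _ h' t' hc' hcd' hcd2' =>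
          ih (Fintype.card E - 1) hEn V' E' h' t' hc' hcd' hcd2'

end Stmt11Aux

/-- Compact type case: let `T` be a finite tree (a connected graph with
`#vertices = #edges + 1`), `r ≥ 1`, and `d : V → ℤ/r` with `Σ_v d(v) = 0` (the class of
the multidegree of `N` mod `r`).  Weight assignments to half-edges with values in
`{0,…,r−1}` are encoded by a pair `(u, v) : (E → ℤ/r)²` (weight at the head and at the
tail of each edge) with `u e + v e = 0` for every edge; the vertex condition says the
incident weights sum to `d`.  Then there is exactly one such weight assignment, and
moreover any such assignment has all weights zero (i.e. `Δ = ∅`) if and only if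
`d ≡ 0`. -/
theorem stmt11 {V E : Type} [Fintype V] [Fintype E] [DecidableEq V]
    (head tail : E → V) (r : ℕ) (hr : 1 ≤ r)
    (hconn : ∀ a b : V, Relation.ReflTransGen
      (fun x y => ∃ e, (head e = x ∧ tail e = y) ∨ (head e = y ∧ tail e = x)) a b)
    (htree : Fintype.card V = Fintype.card E + 1)
    (d : V → ZMod r) (hd : ∑ x, d x = 0) :
    (∃! p : (E → ZMod r) × (E → ZMod r),
      (∀ e, p.1 e + p.2 e = 0) ∧
      (∀ x, (∑ e, ((if head e = x then p.1 e else 0) +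
        (if tail e = x then p.2 e else 0))) = d x)) ∧
    (∀ u v : E → ZMod r, (∀ e, u e + v e = 0) →
      (∀ x, (∑ e, ((if head e = x then u e else 0) +
        (if tail e = x then v e else 0))) = d x) →
      ((∀ e, u e = 0) ↔ ∀ x, d x = 0)) := by
  haveI : DecidableEq E := Classical.decEq E
  have hstmt : Stmt11Aux.Stmt r V E head tail :=
    Stmt11Aux.key r (Fintype.card E) V E head tail hconn htree rfl
  obtain ⟨u₀, hu₀, huniq⟩ := hstmt d hd
  have conv : ∀ (u v : E → ZMod r), (∀ e, u e + v e = 0) → ∀ x,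
      (∑ e, ((if head e = x then u e else 0) + (if tail e = x then v e else 0)))
      = ∑ e, ((if head e = x then u e else 0) - (if tail e = x then u e else 0)) := by
    intro u v huv x
    refine Finset.sum_congr rfl fun e _ => ?_
    have hv : v e = -u e := by linear_combination huv e
    rw [hv, Stmt11Aux.ite_neg']
    ring
  constructor
  · refine ⟨(u₀, fun e => -u₀ e), ⟨fun e => by ring, fun x => ?_⟩, ?_⟩
    · rw [conv u₀ (fun e => -u₀ e) (fun e => by ring) x]
      exact hu₀ x
    · rintro ⟨p1, p2⟩ ⟨hp0, hp⟩
      have hp2 : ∀ e, p2 e = -p1 e := fun e => by linear_combination hp0 e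
      have hp1 : ∀ x, (∑ e, ((if head e = x then p1 e else 0)
          - (if tail e = x then p1 e else 0))) = d x := by
        intro x
        rw [← conv p1 p2 hp0 x]
        exact hp x
      have h1 := huniq p1 hp1
      simp only [Prod.mk.injEq]
      exact ⟨h1, funext fun e => by rw [hp2 e, congrFun h1 e]⟩
  · intro u v huv hsum
    have hu1 : ∀ x, (∑ e, ((if head e = x then u e else 0)
        - (if tail e = x then u e else 0))) = d x := by
      intro x
      rw [← conv u v huv x]
      exact hsum x
    constructor
    · intro hu0 x
      rw [← hu1 x]
      exact Finset.sum_eq_zero fun e _ => by rw [hu0 e]; simp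
    · intro hd0
      have hzero : ∀ x, (∑ e, ((if head e = x then (0 : ZMod r) else 0)
          - (if tail e = x then (0 : ZMod r) else 0))) = d x := by
        intro x; rw [hd0 x]; simp
      have h1 := huniq u hu1
      have h2 := huniq (fun _ => 0) hzero
      intro e
      exact (congrFun h1 e).trans (congrFun h2 e).symm
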